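/- Define r : [1/2, 1] → ℝ by r(d) = √(6d + 10)/√(−1 − 3d + √(1 + 222d + 225d²)). Then r is well defined (the quantity −1 − 3d + √(1 + 222d + 225d²) is strictly positive on [1/2,1]), strictly decreasing on [1/2, 1], and hence a bijection from [1/2, 1] onto [r(1), r(1/2)]; moreover r(1) = 2/√(2√7 − 1). -/

import Mathlib

noncomputable section

/-- The frequency ratio `r(d) = √(6d + 10)/√(−1 − 3d + √(1 + 222d + 225d²))` at the
equilibrium `L₁` of the spatial Hill four-body problem. -/
def rfun (d : ℝ) : ℝ :=
  Real.sqrt (6*d + 10) / Real.sqrt (-1 - 3*d + Real.sqrt (1 + 222*d + 225*d^2))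

namespace RfunAux

def S (d : ℝ) : ℝ := Real.sqrt (1 + 222*d + 225*d^2)

def B (d : ℝ) : ℝ := -1 - 3*d + S d

def f (d : ℝ) : ℝ := (6*d + 10) / B d

lemma Xpos {d : ℝ} (hd : (1/2:ℝ) ≤ d) : 0 < 1 + 222*d + 225*d^2 := by nlinarith

lemma Spos {d : ℝ} (hd : (1/2:ℝ) ≤ d) : 0 < S d := Real.sqrt_pos.2 (Xpos hd)

lemma S_sq {d : ℝ} (hd : (1/2:ℝ) ≤ d) : (S d)^2 = 1 + 222*d + 225*d^2 :=
  Real.sq_sqrt (Xpos hd).le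

lemma S_gt {d : ℝ} (hd : (1/2:ℝ) ≤ d) : 1 + 3*d < S d := by
  rw [S]
  exact (Real.lt_sqrt (by nlinarith)).2 (by nlinarith)

lemma Bpos {d : ℝ} (hd : (1/2:ℝ) ≤ d) : 0 < B d := by
  have := S_gt hd; rw [B]; linarith

lemma S_lt {d : ℝ} (hd : (1/2:ℝ) ≤ d) : S d < 46 + 66*d := by
  rw [S, Real.sqrt_lt' (by nlinarith)]; nlinarith

lemma hasDerivAt_S {d : ℝ} (hd : (1/2:ℝ) ≤ d) :
    HasDerivAt S ((222 + 450*d) / (2 * S d)) d := by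
  have hp : HasDerivAt (fun x : ℝ => 1 + 222*x + 225*x^2) (222 + 450*d) d := by
    have h1 : HasDerivAt (fun x : ℝ => 1 + 222*x) 222 d := by
      simpa using ((hasDerivAt_id d).const_mul (222:ℝ)).const_add 1
    have h2 : HasDerivAt (fun x : ℝ => 225*x^2) (225*(2*d)) d := by
      simpa using (hasDerivAt_pow 2 d).const_mul (225:ℝ)
    have := h1.add h2
    exact this.congr_deriv (by ring)
  have := (Real.hasDerivAt_sqrt (Xpos hd).ne').comp d hp
  exact this.congr_deriv (by unfold S; ring)

lemma hasDerivAt_f {d : ℝ} (hd : (1/2:ℝ) ≤ d) :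
    HasDerivAt f ((6 * B d - (6*d + 10) * (-3 + (222 + 450*d) / (2 * S d))) / (B d)^2) d := by
  have hA : HasDerivAt (fun x : ℝ => 6*x + 10) 6 d := by
    simpa using ((hasDerivAt_id d).const_mul (6:ℝ)).add_const 10
  have hB : HasDerivAt B (-3 + (222 + 450*d) / (2 * S d)) d := by
    have h1 : HasDerivAt (fun x : ℝ => -1 - 3*x) (-3) d := by
      have := ((hasDerivAt_id d).const_mul (3:ℝ)).const_add (-1)
      simpa [sub_eq_add_neg] using ((hasDerivAt_id d).const_mul (-3:ℝ)).const_add (-1)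
    have := h1.add (hasDerivAt_S hd)
    exact this
  exact hA.div hB (Bpos hd).ne'

lemma deriv_f_neg {d : ℝ} (hd : d ∈ Set.Ioo (1/2:ℝ) 1) : deriv f d < 0 := by
  have hd' : (1/2:ℝ) ≤ d := hd.1.le
  rw [(hasDerivAt_f hd').deriv]
  apply div_neg_of_neg_of_pos _ (pow_pos (Bpos hd') 2)
  have hS := Spos hd'
  have hSq := S_sq hd'
  have hlt := S_lt hd'
  have h2S : (0:ℝ) < 2 * S d := by positivity
  have ht : (222 + 450*d) / (2 * S d) * (2 * S d) = 222 + 450*d :=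
    div_mul_cancel₀ _ h2S.ne'
  have hBd : B d = -1 - 3*d + S d := rfl
  nlinarith [mul_pos hS hS, sq_nonneg (S d), hd.1, hd.2]

lemma f_strictAntiOn : StrictAntiOn f (Set.Icc (1/2:ℝ) 1) := by
  apply strictAntiOn_of_deriv_neg (convex_Icc _ _)
  · apply ContinuousOn.div
    · fun_prop
    · apply ContinuousOn.add (by fun_prop)
      exact (Real.continuous_sqrt.comp (by fun_prop)).continuousOn
    · exact fun x hx => (Bpos hx.1).ne'
  · intro x hx
    rw [interior_Icc] at hx
    exact deriv_f_neg hx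

lemma rfun_eq {d : ℝ} (hd : (1/2:ℝ) ≤ d) : rfun d = Real.sqrt (f d) := by
  rw [rfun, f, B, S, Real.sqrt_div (by linarith : (0:ℝ) ≤ 6*d + 10)]

lemma f_nonneg {d : ℝ} (hd : (1/2:ℝ) ≤ d) : 0 ≤ f d :=
  div_nonneg (by linarith) (Bpos hd).le

lemma rfun_strictAntiOn : StrictAntiOn rfun (Set.Icc (1/2:ℝ) 1) := by
  intro a ha b hb hab
  rw [rfun_eq ha.1, rfun_eq hb.1]
  exact Real.sqrt_lt_sqrt (f_nonneg hb.1) (f_strictAntiOn ha hb hab)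

lemma rfun_continuousOn : ContinuousOn rfun (Set.Icc (1/2:ℝ) 1) := by
  apply ContinuousOn.div
  · exact (Real.continuous_sqrt.comp (by fun_prop)).continuousOn
  · exact (Real.continuous_sqrt.comp ((continuous_const.sub (continuous_const.mul continuous_id)).add
      (Real.continuous_sqrt.comp (by fun_prop)))).continuousOn
  · intro x hx
    have : (0:ℝ) < -1 - 3*x + Real.sqrt (1 + 222*x + 225*x^2) := Bpos hx.1
    positivity

end RfunAux

/-- On `[1/2, 1]` the quantity `−1 − 3d + √(1 + 222d + 225d²)` is strictly positive (so `r`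
is well defined), `r` is strictly decreasing, hence a bijection from `[1/2, 1]` onto
`[r(1), r(1/2)]`; moreover `r(1) = 2/√(2√7 − 1)`. -/
theorem rfun_bijection :
    (∀ d ∈ Set.Icc (1/2 : ℝ) 1, 0 < -1 - 3*d + Real.sqrt (1 + 222*d + 225*d^2)) ∧
    StrictAntiOn rfun (Set.Icc (1/2 : ℝ) 1) ∧
    Set.BijOn rfun (Set.Icc (1/2 : ℝ) 1) (Set.Icc (rfun 1) (rfun (1/2))) ∧
    rfun 1 = 2 / Real.sqrt (2 * Real.sqrt 7 - 1) := by
  have hmem12 : (1/2:ℝ) ∈ Set.Icc (1/2:ℝ) 1 := by norm_num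
  have hmem1 : (1:ℝ) ∈ Set.Icc (1/2:ℝ) 1 := by norm_num
  have hanti := RfunAux.rfun_strictAntiOn
  refine ⟨fun d hd => RfunAux.Bpos hd.1, hanti, ⟨?_, hanti.injOn, ?_⟩, ?_⟩
  · intro x hx
    constructor
    · rcases hx.2.eq_or_lt with h | h
      · rw [h]
      · exact (hanti hx hmem1 h).le
    · rcases hx.1.eq_or_lt with h | h
      · rw [← h]
      · exact (hanti hmem12 hx h).le
  · exact intermediate_value_Icc' (by norm_num) RfunAux.rfun_continuousOn
  · have h448 : Real.sqrt 448 = 8 * Real.sqrt 7 := by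
      rw [show (448:ℝ) = 8^2*7 by norm_num, Real.sqrt_mul (by positivity),
        Real.sqrt_sq (by norm_num)]
    have h7 : (1:ℝ) < Real.sqrt 7 := by
      rw [show (1:ℝ) = Real.sqrt 1 by simp]
      exact Real.sqrt_lt_sqrt (by norm_num) (by norm_num)
    have hden : (-1 - 3*1 + Real.sqrt (1 + 222*1 + 225*1^2) : ℝ)
        = 4 * (2 * Real.sqrt 7 - 1) := by
      norm_num [h448]; ring
    rw [rfun, hden, show (6*(1:ℝ)+10 : ℝ) = 16 by norm_num,
      Real.sqrt_mul (by norm_num : (0:ℝ) ≤ 4),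
      show Real.sqrt 16 = 4 by rw [show (16:ℝ) = 4^2 by norm_num]; exact Real.sqrt_sq (by norm_num),
      show Real.sqrt 4 = 2 by rw [show (4:ℝ) = 2^2 by norm_num]; exact Real.sqrt_sq (by norm_num)]
    rw [show (4:ℝ) = 2*2 by norm_num, mul_div_mul_left _ _ (by norm_num : (2:ℝ) ≠ 0)]

end
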